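/- Deposit sufficiency for epoch snapshot trading: if a user's epoch activity consists of swaps whose inputs in token A total I_A and outputs in token A total O_A (similarly I_B, O_B), then processing them in any order with running-balance checks succeeds whenever the initial deposit satisfies d_A ≥ I_A and d_B ≥ I_B; i.e., depositing the gross input amounts (ignoring interim accrued outputs) always suffices. -/

import Mathlib

/-- A swap: direction (`true` = input token A, output token B), input amount, output
amount. Processing deducts the input from one token's running balance and adds the
output to the other. -/
def swapStep (b : ℤ × ℤ) (tx : Bool × ℤ × ℤ) : ℤ × ℤ :=
  if tx.1 then (b.1 - tx.2.1, b.2 + tx.2.2) else (b.1 + tx.2.2, b.2 - tx.2.1)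

def SA (P : List (Bool × ℤ × ℤ)) : ℤ :=
  ((P.filter (fun tx => tx.1 = true)).map (fun tx => tx.2.1)).sum

def SB (P : List (Bool × ℤ × ℤ)) : ℤ :=
  ((P.filter (fun tx => tx.1 = false)).map (fun tx => tx.2.1)).sum

lemma aux (P : List (Bool × ℤ × ℤ)) : ∀ a b : ℤ, (∀ tx ∈ P, 0 ≤ tx.2.2) →
    a - SA P ≤ (P.foldl swapStep (a, b)).1 ∧ b - SB P ≤ (P.foldl swapStep (a, b)).2 := by
  induction P with
  | nil => intro a b _; simp [SA, SB]
  | cons tx P ih =>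
    intro a b h
    obtain ⟨f, i, o⟩ := tx
    have ho : (0:ℤ) ≤ o := h ⟨f, i, o⟩ (by simp)
    have h' : ∀ t ∈ P, 0 ≤ t.2.2 := fun t ht => h t (by simp [ht])
    cases f
    · have := ih (a + o) (b - i) h'
      simp only [List.foldl_cons, swapStep, SA, SB, List.filter_cons] at *
      norm_num at this ⊢
      refine ⟨?_, ?_⟩
      · linarith [this.1]
      · linarith [this.2]
    · have := ih (a - i) (b + o) h'
      simp only [List.foldl_cons, swapStep, SA, SB, List.filter_cons] at *
      norm_num at this ⊢
      refine ⟨?_, ?_⟩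
      · linarith [this.1]
      · linarith [this.2]

lemma sum_nonneg' (P : List (Bool × ℤ × ℤ)) (h : ∀ tx ∈ P, 0 ≤ tx.2.1) :
    0 ≤ SA P ∧ 0 ≤ SB P := by
  constructor <;> apply List.sum_nonneg <;> intro x hx <;>
    simp only [List.mem_map] at hx <;> obtain ⟨t, ht, rfl⟩ := hx <;>
    exact h t (List.mem_of_mem_filter ht)

/-- Deposit sufficiency for epoch snapshot trading: if the initial deposit covers the
gross total input in each token (`dA ≥ Σ inputs in A`, `dB ≥ Σ inputs in B`), all
amounts being nonnegative, then processing the swaps in any order succeeds: each swap's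
running-balance check (input at most the current balance of the input token) passes. -/
theorem deposit_gross_input_suffices (L : List (Bool × ℤ × ℤ)) (dA dB : ℤ)
    (hdA : 0 ≤ dA) (hdB : 0 ≤ dB)
    (hio : ∀ tx ∈ L, 0 ≤ tx.2.1 ∧ 0 ≤ tx.2.2)
    (hIA : ((L.filter (fun tx => tx.1 = true)).map (fun tx => tx.2.1)).sum ≤ dA)
    (hIB : ((L.filter (fun tx => tx.1 = false)).map (fun tx => tx.2.1)).sum ≤ dB) :
    ∀ (n : ℕ) (h : n < L.length),
      let b := (L.take n).foldl swapStep (dA, dB)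
      if (L.get ⟨n, h⟩).1 then (L.get ⟨n, h⟩).2.1 ≤ b.1
      else (L.get ⟨n, h⟩).2.1 ≤ b.2 := by
  intro n h
  set tx := L.get ⟨n, h⟩ with htx
  have hdecomp : L = L.take n ++ tx :: L.drop (n + 1) := by
    rw [htx, List.get_eq_getElem, List.getElem_cons_drop, List.take_append_drop]
  have hsub : ∀ t ∈ L.take n, t ∈ L := fun t ht => List.mem_of_mem_take ht
  have haux := aux (L.take n) dA dB (fun t ht => (hio t (hsub t ht)).2)
  have hrestA : SA L = SA (L.take n) + SA (tx :: L.drop (n + 1)) := by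
    nth_rewrite 1 [hdecomp]; simp [SA, List.filter_append]
  have hrestB : SB L = SB (L.take n) + SB (tx :: L.drop (n + 1)) := by
    nth_rewrite 1 [hdecomp]; simp [SB, List.filter_append]
  have hdropnn : ∀ t ∈ L.drop (n+1), 0 ≤ t.2.1 := fun t ht =>
    (hio t (List.mem_of_mem_drop ht)).1
  have hsd := sum_nonneg' (L.drop (n+1)) hdropnn
  simp only []
  rcases Bool.eq_false_or_eq_true tx.1 with hb | hb
  · rw [hb]; simp only [if_true]
    have hSA : SA (tx :: L.drop (n+1)) = tx.2.1 + SA (L.drop (n+1)) := by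
      simp [SA, List.filter_cons, hb]
    have : SA (L.take n) + tx.2.1 ≤ dA := by
      have : SA L ≤ dA := hIA
      rw [hrestA, hSA] at this; linarith [hsd.1]
    linarith [haux.1]
  · rw [hb]; simp only [Bool.false_eq_true, if_false]
    have hSB : SB (tx :: L.drop (n+1)) = tx.2.1 + SB (L.drop (n+1)) := by
      simp [SB, List.filter_cons, hb]
    have : SB (L.take n) + tx.2.1 ≤ dB := by
      have : SB L ≤ dB := hIB
      rw [hrestB, hSB] at this; linarith [hsd.2]
    linarith [haux.2]
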